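/- For each n ∈ ℤ, the basis vector eₙ is an analytic vector for the operator A₀ defined by A₀eₘ = -i·m·(e_{m+1} - e_{m-1}): the series Σ_{k≥0} (|θ|ᵏ/k!)·‖A₀ᵏeₙ‖ converges for all complex θ with |θ| < 1/2. -/

import Mathlib

/-- The canonical basis vector `eₙ`, as a finitely supported function. -/
noncomputable def e (n : ℤ) : ℤ →₀ ℂ := Finsupp.single n 1

/-- The operator `A₀` acting on finite linear combinations of basis vectors by
`A₀ eₙ = -i n (e_{n+1} - e_{n-1})`. -/
noncomputable def A0 : Module.End ℂ (ℤ →₀ ℂ) :=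
  Finsupp.lsum ℂ fun n : ℤ =>
    LinearMap.toSpanSingleton ℂ (ℤ →₀ ℂ)
      ((-Complex.I * (n : ℂ)) • (Finsupp.single (n + 1) 1 - Finsupp.single (n - 1) 1))

/-- The ℓ² norm of a finitely supported function. -/
noncomputable def l2norm (x : ℤ →₀ ℂ) : ℝ := Real.sqrt (∑ m ∈ x.support, ‖x m‖ ^ 2)

open Finset Filter
noncomputable def S (x : ℤ →₀ ℂ) : ℝ := ∑ m ∈ x.support, ‖x m‖

lemma S_eq_sum {x : ℤ →₀ ℂ} {t : Finset ℤ} (h : x.support ⊆ t) :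
    S x = ∑ m ∈ t, ‖x m‖ := by
  refine Finset.sum_subset h fun m _ hm => ?_
  simp [Finsupp.notMem_support_iff.mp hm]

lemma S_nonneg (x : ℤ →₀ ℂ) : 0 ≤ S x :=
  Finset.sum_nonneg fun _ _ => norm_nonneg _

lemma S_add_le (x y : ℤ →₀ ℂ) : S (x + y) ≤ S x + S y := by
  rw [S_eq_sum (t := x.support ∪ y.support) Finsupp.support_add,
    S_eq_sum (t := x.support ∪ y.support) Finset.subset_union_left,
    S_eq_sum (t := x.support ∪ y.support) Finset.subset_union_right,
    ← Finset.sum_add_distrib]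
  exact Finset.sum_le_sum fun m _ => by simpa using norm_add_le (x m) (y m)

lemma S_smul_le (c : ℂ) (x : ℤ →₀ ℂ) : S (c • x) ≤ ‖c‖ * S x := by
  rw [S_eq_sum (t := x.support) Finsupp.support_smul, S, Finset.mul_sum]
  exact Finset.sum_le_sum fun m _ => by simp [norm_smul]

lemma S_single_le (a : ℤ) (c : ℂ) : S (Finsupp.single a c) ≤ ‖c‖ := by
  rw [S_eq_sum (t := {a}) Finsupp.support_single_subset, Finset.sum_singleton,
    Finsupp.single_eq_same]

lemma S_sub_le (x y : ℤ →₀ ℂ) : S (x - y) ≤ S x + S y := by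
  have : S (-y) = S y := by
    simp [S, Finsupp.support_neg]
  calc S (x - y) = S (x + -y) := by rw [sub_eq_add_neg]
  _ ≤ S x + S (-y) := S_add_le _ _
  _ = S x + S y := by rw [this]

lemma S_sum_le {ι : Type*} (t : Finset ι) (y : ι → ℤ →₀ ℂ) :
    S (∑ i ∈ t, y i) ≤ ∑ i ∈ t, S (y i) := by
  classical
  induction t using Finset.induction with
  | empty => simp [S]
  | @insert a s h ih =>
    rw [Finset.sum_insert h, Finset.sum_insert h]
    exact (S_add_le _ _).trans (by linarith)

lemma l2norm_le_S (x : ℤ →₀ ℂ) : l2norm x ≤ S x := by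
  have h1 : ∑ m ∈ x.support, ‖x m‖ ^ 2 ≤ (S x) ^ 2 :=
    sum_sq_le_sq_sum_of_nonneg fun _ _ => norm_nonneg _
  calc l2norm x ≤ Real.sqrt ((S x) ^ 2) := Real.sqrt_le_sqrt h1
  _ = S x := Real.sqrt_sq (S_nonneg x)

lemma A0_apply (x : ℤ →₀ ℂ) :
    A0 x = ∑ m ∈ x.support, x m •
      ((-Complex.I * (m : ℂ)) • (Finsupp.single (m+1) 1 - Finsupp.single (m-1) 1)) := by
  rw [A0, Finsupp.lsum_apply, Finsupp.sum]
  exact Finset.sum_congr rfl fun m _ => by rw [LinearMap.toSpanSingleton_apply]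

lemma norm_coeff (m : ℤ) : ‖(-Complex.I * (m : ℂ))‖ = (m.natAbs : ℝ) := by
  rw [norm_mul, norm_neg, Complex.norm_I, one_mul]
  rw [Complex.norm_intCast, Nat.cast_natAbs]
  norm_num

lemma step (x : ℤ →₀ ℂ) (M : ℕ) (h : ∀ m ∈ x.support, m.natAbs ≤ M) :
    (∀ m ∈ (A0 x).support, m.natAbs ≤ M + 1) ∧ S (A0 x) ≤ 2 * M * S x := by
  classical
  constructor
  · intro m' hm'
    rw [A0_apply] at hm'
    have h1 := Finsupp.support_finset_sum hm'
    obtain ⟨m, hm, hmem⟩ := Finset.mem_biUnion.mp h1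
    have h2 : m' ∈ ({m+1} ∪ {m-1} : Finset ℤ) := by
      have := Finsupp.support_smul.trans (Finsupp.support_smul (b := -Complex.I * (m:ℂ))) hmem
      exact (Finsupp.support_sub.trans (Finset.union_subset_union
        Finsupp.support_single_subset Finsupp.support_single_subset)) this
    have hM := h m hm
    simp only [Finset.mem_union, Finset.mem_singleton] at h2
    rcases h2 with rfl | rfl <;> omega
  · rw [A0_apply]
    calc S (∑ m ∈ x.support, x m •
          ((-Complex.I * (m : ℂ)) • (Finsupp.single (m+1) 1 - Finsupp.single (m-1) 1)))
        ≤ ∑ m ∈ x.support, S (x m •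
          ((-Complex.I * (m : ℂ)) • (Finsupp.single (m+1) 1 - Finsupp.single (m-1) 1))) :=
        S_sum_le _ _
      _ ≤ ∑ m ∈ x.support, ‖x m‖ * (2 * M) := by
        refine Finset.sum_le_sum fun m hm => ?_
        refine (S_smul_le _ _).trans ?_
        refine mul_le_mul_of_nonneg_left ?_ (norm_nonneg _)
        refine (S_smul_le _ _).trans ?_
        have h1 : S (Finsupp.single (m+1) (1:ℂ) - Finsupp.single (m-1) 1) ≤ 2 := by
          refine (S_sub_le _ _).trans ?_
          have := S_single_le (m+1) (1:ℂ)
          have := S_single_le (m-1) (1:ℂ)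
          simp only [norm_one] at *
          linarith
        have h2 : ‖(-Complex.I * (m : ℂ))‖ ≤ (M : ℝ) := by
          rw [norm_coeff]; exact_mod_cast h m hm
        calc ‖(-Complex.I * (m : ℂ))‖ * S (Finsupp.single (m+1) (1:ℂ) - Finsupp.single (m-1) 1)
            ≤ (M : ℝ) * 2 := by
              apply mul_le_mul h2 h1 (S_nonneg _) (Nat.cast_nonneg _)
          _ = 2 * M := by ring
      _ = 2 * M * S x := by rw [← Finset.sum_mul, S]; ring

lemma key (n : ℤ) (k : ℕ) :
    (∀ m ∈ ((A0 ^ k) (e n)).support, m.natAbs ≤ n.natAbs + k) ∧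
      S ((A0 ^ k) (e n)) ≤ 2 ^ k * ∏ j ∈ Finset.range k, ((n.natAbs : ℝ) + j) := by
  induction k with
  | zero =>
    simp only [pow_zero, Module.End.one_apply, Finset.range_zero, Finset.prod_empty, mul_one]
    constructor
    · intro m hm
      have := Finsupp.support_single_subset hm
      simp only [Finset.mem_singleton] at this
      subst this; simp
    · simpa [e] using S_single_le n (1:ℂ)
  | succ k ih =>
    have hpow : (A0 ^ (k+1)) (e n) = A0 ((A0 ^ k) (e n)) := by
      rw [pow_succ', Module.End.mul_apply]
    have h := step ((A0 ^ k) (e n)) (n.natAbs + k) ih.1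
    constructor
    · intro m hm
      rw [hpow] at hm
      have := h.1 m hm
      omega
    · rw [hpow]
      have hb : (0:ℝ) ≤ 2 * ((n.natAbs : ℝ) + k) := by positivity
      calc S (A0 ((A0 ^ k) (e n))) ≤ 2 * ((n.natAbs : ℝ) + k) * S ((A0 ^ k) (e n)) := by
            have := h.2; push_cast at this; linarith [this]
        _ ≤ 2 * ((n.natAbs : ℝ) + k) * (2 ^ k * ∏ j ∈ Finset.range k, ((n.natAbs : ℝ) + j)) :=
            mul_le_mul_of_nonneg_left ih.2 hb
        _ = 2 ^ (k+1) * ∏ j ∈ Finset.range (k+1), ((n.natAbs : ℝ) + j) := by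
            rw [Finset.prod_range_succ]; ring

/-- Each `eₙ` is an analytic vector for `A₀`: the series
`Σₖ (|θ|ᵏ/k!)·‖A₀ᵏ eₙ‖` converges for `|θ| < 1/2`. -/
theorem e_analytic_vector (n : ℤ) (θ : ℂ) (hθ : ‖θ‖ < 1 / 2) :
    Summable fun k : ℕ =>
      ‖θ‖ ^ k / (Nat.factorial k : ℝ) * l2norm ((A0 ^ k) (e n)) := by
  classical
  set r : ℝ := ‖θ‖ with hrdef
  have hr0 : 0 ≤ r := norm_nonneg _
  set N : ℕ := n.natAbs with hNdef
  have hl2 : ∀ k, 0 ≤ l2norm ((A0 ^ k) (e n)) := fun k => Real.sqrt_nonneg _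
  have hnonneg : ∀ k, 0 ≤ r ^ k / (Nat.factorial k : ℝ) * l2norm ((A0 ^ k) (e n)) :=
    fun k => mul_nonneg (div_nonneg (pow_nonneg hr0 _) (Nat.cast_nonneg _)) (hl2 k)
  by_cases h0 : r = 0
  · apply summable_of_ne_finset_zero (s := ({0} : Finset ℕ))
    intro k hk
    simp only [Finset.mem_singleton] at hk
    rw [h0, zero_pow hk, zero_div, zero_mul]
  by_cases hn0 : n = 0
  · subst hn0
    apply summable_of_ne_finset_zero (s := ({0} : Finset ℕ))
    intro k hk
    simp only [Finset.mem_singleton] at hk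
    obtain ⟨k, rfl⟩ := Nat.exists_eq_succ_of_ne_zero hk
    have hsupp : (e 0).support = {0} := by
      rw [e]; exact Finsupp.support_single_ne_zero _ one_ne_zero
    have hz : A0 (e 0) = 0 := by
      rw [A0_apply, hsupp, Finset.sum_singleton]
      norm_num
    have hzz : (A0 ^ (k + 1)) (e 0) = 0 := by
      rw [pow_succ, Module.End.mul_apply, hz, map_zero]
    rw [hzz]
    simp [l2norm]
  -- main case
  have hN1 : 1 ≤ N := Int.natAbs_pos.mpr hn0
  set b : ℕ → ℝ := fun k => (2 * r) ^ k * (∏ j ∈ Finset.range k, ((N : ℝ) + j)) /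
    (Nat.factorial k : ℝ) with hbdef
  have hrpos : 0 < r := lt_of_le_of_ne hr0 (Ne.symm h0)
  have hprod_pos : ∀ k, 0 < ∏ j ∈ Finset.range k, ((N : ℝ) + j) := by
    intro k
    refine Finset.prod_pos fun j _ => ?_
    have : (1 : ℝ) ≤ (N : ℝ) := by exact_mod_cast hN1
    positivity
  have hb_pos : ∀ k, 0 < b k := by
    intro k
    rw [hbdef]
    have h1 : (0:ℝ) < (2 * r) ^ k := by positivity
    have h2 := hprod_pos k
    have h3 : (0:ℝ) < (Nat.factorial k : ℝ) := by exact_mod_cast Nat.factorial_pos k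
    positivity
  have hb_sum : Summable b := by
    apply summable_of_ratio_test_tendsto_lt_one (l := 2 * r)
    · linarith
    · exact Filter.Eventually.of_forall fun k => (hb_pos k).ne'
    · have hratio : ∀ k : ℕ, ‖b (k + 1)‖ / ‖b k‖ =
          2 * r + (2 * r * ((N : ℝ) - 1)) * (1 / ((k : ℝ) + 1)) := by
        intro k
        have h1 : b (k + 1) = 2 * r * ((N : ℝ) + k) / ((k : ℝ) + 1) * b k := by
          rw [hbdef]
          simp only
          rw [Finset.prod_range_succ, Nat.factorial_succ, pow_succ]
          have hk1 : ((k : ℝ) + 1) ≠ 0 := by positivity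
          have hkf : (Nat.factorial k : ℝ) ≠ 0 := by
            exact_mod_cast (Nat.factorial_pos k).ne'
          push_cast
          field_simp
        rw [Real.norm_eq_abs, Real.norm_eq_abs, abs_of_pos (hb_pos _), abs_of_pos (hb_pos _),
          h1, mul_div_assoc, div_self (hb_pos k).ne', mul_one]
        have hk1 : ((k : ℝ) + 1) ≠ 0 := by positivity
        field_simp
        ring
      have lim : Filter.Tendsto
          (fun k : ℕ => 2 * r + (2 * r * ((N : ℝ) - 1)) * (1 / ((k : ℝ) + 1)))
          Filter.atTop (nhds (2 * r)) := by
        have h2 := tendsto_one_div_add_atTop_nhds_zero_nat.const_mul (2 * r * ((N : ℝ) - 1))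
        have h3 := (tendsto_const_nhds (x := 2 * r) (f := Filter.atTop (α := ℕ))).add h2
        simpa using h3
      exact lim.congr fun k => (hratio k).symm
  refine Summable.of_nonneg_of_le hnonneg (fun k => ?_) hb_sum
  have h1 := (key n k).2
  have h2 := l2norm_le_S ((A0 ^ k) (e n))
  have h3 : (0:ℝ) ≤ r ^ k / (Nat.factorial k : ℝ) :=
    div_nonneg (pow_nonneg hr0 _) (Nat.cast_nonneg _)
  calc r ^ k / (Nat.factorial k : ℝ) * l2norm ((A0 ^ k) (e n))
      ≤ r ^ k / (Nat.factorial k : ℝ) * S ((A0 ^ k) (e n)) :=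
        mul_le_mul_of_nonneg_left h2 h3
    _ ≤ r ^ k / (Nat.factorial k : ℝ) *
        (2 ^ k * ∏ j ∈ Finset.range k, ((N : ℝ) + j)) :=
        mul_le_mul_of_nonneg_left h1 h3
    _ = b k := by rw [hbdef]; simp only; rw [mul_pow]; ring
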